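/- For a fine simplicial fan arising from a 4-dimensional reflexive polytope Δ°, every basepoint cone has dimension exactly 3. In particular, no basepoint cone has dimension 2 (two generators not sharing a facet force an interior lattice point of the cone, contradicting fineness), and no basepoint cone has dimension 4. -/

import Mathlib

open Topology

noncomputable section StmtAux

/-- Cast an integer vector to a real vector. -/
def toR {n : ℕ} (w : Fin n → ℤ) : Fin n → ℝ := fun i => (w i : ℝ)

/-- The pairing of an integral normal with a real vector. -/
def dotZ (m : Fin 4 → ℤ) (x : Fin 4 → ℝ) : ℝ := ∑ i, (m i : ℝ) * x i

lemma dotZ_add (m : Fin 4 → ℤ) (x y : Fin 4 → ℝ) :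
    dotZ m (x + y) = dotZ m x + dotZ m y := by
  simp [dotZ, mul_add, Finset.sum_add_distrib]

lemma dotZ_smul (m : Fin 4 → ℤ) (c : ℝ) (x : Fin 4 → ℝ) :
    dotZ m (c • x) = c * dotZ m x := by
  simp only [dotZ, Finset.mul_sum, Pi.smul_apply, smul_eq_mul]
  exact Finset.sum_congr rfl fun i _ => by ring

lemma dotZ_sub (m : Fin 4 → ℤ) (x y : Fin 4 → ℝ) :
    dotZ m (x - y) = dotZ m x - dotZ m y := by
  simp [dotZ, mul_sub, Finset.sum_sub_distrib]

lemma continuous_dotZ (m : Fin 4 → ℤ) : Continuous (dotZ m) := by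
  unfold dotZ
  exact continuous_finset_sum _ fun i _ => continuous_const.mul (continuous_apply i)

lemma dotZ_toR (m w : Fin 4 → ℤ) : dotZ m (toR w) = ((∑ i, m i * w i : ℤ) : ℝ) := by
  push_cast [dotZ, toR]
  rfl

lemma dotZ_sum {α : Type*} (m : Fin 4 → ℤ) (s : Finset α) (f : α → (Fin 4 → ℝ)) :
    dotZ m (∑ i ∈ s, f i) = ∑ i ∈ s, dotZ m (f i) := by
  classical
  induction s using Finset.induction with
  | empty => simp [dotZ]
  | insert a s h ih => rw [Finset.sum_insert h, dotZ_add, ih, Finset.sum_insert h]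


variable {M : Finset (Fin 4 → ℤ)} {P : Set (Fin 4 → ℝ)}

lemma P_isClosed (hPM : P = {x | ∀ m ∈ M, (-1 : ℝ) ≤ dotZ m x}) : IsClosed P := by
  have : P = ⋂ m ∈ M, {x | (-1 : ℝ) ≤ dotZ m x} := by
    rw [hPM]; ext x; simp
  rw [this]
  exact isClosed_biInter fun m _ => isClosed_le continuous_const (continuous_dotZ m)

lemma strict_isOpen (M : Finset (Fin 4 → ℤ)) :
    IsOpen {x : Fin 4 → ℝ | ∀ m ∈ M, (-1 : ℝ) < dotZ m x} := by
  have : {x : Fin 4 → ℝ | ∀ m ∈ M, (-1 : ℝ) < dotZ m x}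
      = ⋂ m ∈ M, {x | (-1 : ℝ) < dotZ m x} := by ext x; simp
  rw [this]
  exact isOpen_biInter_finset fun m _ => isOpen_lt continuous_const (continuous_dotZ m)

lemma tight_mem_frontier (hPM : P = {x | ∀ m ∈ M, (-1 : ℝ) ≤ dotZ m x})
    {x : Fin 4 → ℝ} (hx : x ∈ P) {m : Fin 4 → ℤ} (hm : m ∈ M)
    (ht : dotZ m x = -1) : x ∈ frontier P := by
  refine ⟨subset_closure hx, fun hint => ?_⟩
  have hmne : ∃ i, m i ≠ 0 := by
    by_contra h
    push_neg at h
    rw [show dotZ m x = 0 by simp [dotZ, h]] at ht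
    norm_num at ht
  obtain ⟨i0, hi0⟩ := hmne
  have hpos : 0 < dotZ m (toR m) := by
    have h1 : dotZ m (toR m) = ∑ i, ((m i : ℝ)) ^ 2 := by
      simp [dotZ, toR, sq]
    rw [h1]
    refine Finset.sum_pos' (fun i _ => sq_nonneg _) ⟨i0, Finset.mem_univ _, ?_⟩
    have : (m i0 : ℝ) ≠ 0 := Int.cast_ne_zero.2 hi0
    positivity
  have hnb : P ∈ 𝓝 x := mem_nhds_iff.2 ⟨interior P, interior_subset, isOpen_interior, hint⟩
  have hcont : ContinuousAt (fun t : ℝ => x - t • toR m) 0 := by fun_prop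
  have hev : ∀ᶠ t : ℝ in 𝓝 0, x - t • toR m ∈ P := by
    refine hcont.eventually_mem ?_
    simpa using hnb
  rw [Metric.eventually_nhds_iff] at hev
  obtain ⟨ε, hε, hball⟩ := hev
  have hy : x - (ε / 2) • toR m ∈ P := by
    refine hball ?_
    rw [Real.dist_eq, sub_zero, abs_of_pos (by linarith)]
    linarith
  rw [hPM] at hy
  have := hy m hm
  rw [dotZ_sub, dotZ_smul, ht] at this
  nlinarith

lemma frontier_tight (hPM : P = {x | ∀ m ∈ M, (-1 : ℝ) ≤ dotZ m x})
    {x : Fin 4 → ℝ} (hx : x ∈ frontier P) : x ∈ P ∧ ∃ m ∈ M, dotZ m x = -1 := by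
  have hxP : x ∈ P := (P_isClosed hPM).frontier_subset hx
  have hnotint : x ∉ interior P := hx.2
  have hU : {y : Fin 4 → ℝ | ∀ m ∈ M, (-1 : ℝ) < dotZ m y} ⊆ interior P := by
    refine (strict_isOpen M).subset_interior_iff.2 ?_
    intro y hy
    rw [hPM]
    exact fun m hm => (hy m hm).le
  have hxU : x ∉ {y : Fin 4 → ℝ | ∀ m ∈ M, (-1 : ℝ) < dotZ m y} := fun h => hnotint (hU h)
  simp only [Set.mem_setOf_eq, not_forall, not_lt] at hxU
  obtain ⟨m, hm, hle⟩ := hxU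
  rw [hPM] at hxP
  exact ⟨hPM ▸ hxP, m, hm, le_antisymm hle (hxP m hm)⟩

lemma no_recession (hPM : P = {x | ∀ m ∈ M, (-1 : ℝ) ≤ dotZ m x})
    (hcomp : IsCompact P) {x : Fin 4 → ℝ} (hx0 : x ≠ 0)
    (h : ∀ m ∈ M, 0 ≤ dotZ m x) : False := by
  obtain ⟨Cb, hCb⟩ := isBounded_iff_forall_norm_le.1 hcomp.isBounded
  have hmem : ∀ n : ℕ, (n : ℝ) • x ∈ P := by
    intro n
    rw [hPM]
    intro m hm
    rw [dotZ_smul]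
    have := mul_nonneg (Nat.cast_nonneg (α := ℝ) n) (h m hm)
    linarith
  have hxpos : 0 < ‖x‖ := norm_pos_iff.2 hx0
  obtain ⟨n, hn⟩ := exists_nat_gt (Cb / ‖x‖)
  have h1 := hCb _ (hmem n)
  rw [norm_smul, Real.norm_natCast] at h1
  have h2 : Cb / ‖x‖ < (n : ℝ) := hn
  rw [div_lt_iff₀ hxpos] at h2
  linarith

lemma mem_intrinsicInterior_cone {n k : ℕ} {v : Fin k → (Fin n → ℝ)}
    (hv : LinearIndependent ℝ v) {b : Fin k → ℝ} (hb : ∀ i, 0 < b i) :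
    (∑ i, b i • v i) ∈ intrinsicInterior ℝ
      {x : Fin n → ℝ | ∃ a : Fin k → ℝ, (∀ i, 0 ≤ a i) ∧ x = ∑ i, a i • v i} := by
  set C := {x : Fin n → ℝ | ∃ a : Fin k → ℝ, (∀ i, 0 ≤ a i) ∧ x = ∑ i, a i • v i} with hC
  have h0C : (0 : Fin n → ℝ) ∈ C := ⟨0, fun i => le_refl 0, by simp⟩
  have hvC : ∀ i, v i ∈ C := by
    intro i
    refine ⟨fun j => if j = i then 1 else 0, fun j => by positivity, ?_⟩
    simp [ite_smul]
  set W := Submodule.span ℝ (Set.range v) with hW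
  set S := affineSpan ℝ C with hSdef
  have hS0 : (0 : Fin n → ℝ) ∈ S := subset_affineSpan ℝ C h0C
  have hCW : C ⊆ (W : Set (Fin n → ℝ)) := by
    rintro x ⟨a, -, rfl⟩
    exact Submodule.sum_mem _ fun i _ =>
      Submodule.smul_mem _ _ (Submodule.subset_span (Set.mem_range_self i))
  have hset : (W : Set (Fin n → ℝ)) = (S : Set (Fin n → ℝ)) := by
    apply le_antisymm
    · intro x hx
      refine Submodule.span_induction ?_ ?_ ?_ ?_ hx
      · rintro y ⟨i, rfl⟩; exact subset_affineSpan ℝ C (hvC i)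
      · exact hS0
      · intro y z _ _ hy hz
        have h1 : y -ᵥ (0 : Fin n → ℝ) ∈ S.direction :=
          AffineSubspace.vsub_mem_direction hy hS0
        have := AffineSubspace.vadd_mem_of_mem_direction h1 hz
        simpa using this
      · intro c y _ hy
        have h1 : y -ᵥ (0 : Fin n → ℝ) ∈ S.direction :=
          AffineSubspace.vsub_mem_direction hy hS0
        have h2 : c • (y -ᵥ (0 : Fin n → ℝ)) ∈ S.direction := Submodule.smul_mem _ _ h1
        have := AffineSubspace.vadd_mem_of_mem_direction h2 hS0
        simpa using this
    · have : S ≤ W.toAffineSubspace := by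
        rw [hSdef, affineSpan_le]
        exact hCW
      exact this
  haveI : FiniteDimensional ℝ W := inferInstance
  set bW : Module.Basis (Fin k) ℝ W := Module.Basis.span hv with hbW
  set eq1 : (Fin k → ℝ) ≃ₗ[ℝ] W := bW.equivFun.symm with heq1
  set e : (Fin k → ℝ) ≃ₜ S :=
    eq1.toContinuousLinearEquiv.toHomeomorph.trans (Homeomorph.setCongr hset) with he
  have hval : ∀ a : Fin k → ℝ, ((e a : S) : Fin n → ℝ) = ∑ i, a i • v i := by
    intro a
    have : ((e a : S) : Fin n → ℝ) = ((eq1 a : W) : Fin n → ℝ) := rfl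
    rw [this, heq1]
    rw [Module.Basis.equivFun_symm_apply]
    push_cast [Submodule.coe_sum]
    exact Finset.sum_congr rfl fun i _ => by rw [hbW, Module.Basis.span_apply]
  have himg : e '' {a : Fin k → ℝ | ∀ i, 0 ≤ a i} =
      ((↑) : S → (Fin n → ℝ)) ⁻¹' C := by
    ext y
    constructor
    · rintro ⟨a, ha, rfl⟩
      exact Set.mem_preimage.2 ⟨a, ha, hval a⟩
    · intro hy
      obtain ⟨a, ha, hya⟩ := hy
      refine ⟨a, ha, ?_⟩
      apply Subtype.ext
      rw [hval a, ← hya]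
  have hOint : b ∈ interior {a : Fin k → ℝ | ∀ i, 0 ≤ a i} := by
    have hpi : {a : Fin k → ℝ | ∀ i, 0 ≤ a i} = Set.pi Set.univ (fun _ => Set.Ici 0) := by
      ext a; simp only [Set.mem_pi, Set.mem_univ, forall_true_left, Set.mem_Ici, Set.mem_setOf_eq, forall_const]
    rw [hpi, interior_pi_set Set.finite_univ]
    intro i _
    simpa using hb i
  have hmem : e b ∈ interior (((↑) : S → (Fin n → ℝ)) ⁻¹' C) := by
    rw [← himg, ← Homeomorph.image_interior]
    exact Set.mem_image_of_mem _ hOint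
  exact ⟨e b, hmem, hval b⟩

end StmtAux

/-- For a fine simplicial fan `F` arising from a 4-dimensional
reflexive polytope `Δ° = P` (a lattice polytope, equal to the intersection of the
halfspaces `⟨m, ·⟩ ≥ -1` over its finite set `M` of integral facet normals, with `0`
in its interior), every basepoint cone has dimension exactly `3`.  Here a cone of `F`
with linearly independent generators `u₁, …, u_k` (boundary lattice points of `Δ°`) is
a *basepoint cone* when its generators are contained in no facet of `Δ°` while, for
each `j`, the generators `{uᵢ : i ≠ j}` of each maximal proper face are contained in
some facet.  In particular no basepoint cone has dimension `2` or dimension `4`. -/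
theorem stmt_12 (V M : Finset (Fin 4 → ℤ)) (P : Set (Fin 4 → ℝ))
    (hPV : P = convexHull ℝ (toR '' ↑V))
    (hPM : P = {x | ∀ m ∈ M, (-1 : ℝ) ≤ ∑ i, (m i : ℝ) * x i})
    (h0 : (0 : Fin 4 → ℝ) ∈ interior P)
    (F : Set (Set (Fin 4 → ℝ)))
    (hfan : ∀ σ ∈ F, ∀ τ ∈ F, σ ≠ τ →
      intrinsicInterior ℝ σ ∩ intrinsicInterior ℝ τ = ∅)
    (hfine : ∀ w : Fin 4 → ℤ, toR w ∈ frontier P →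
      {x | ∃ c : ℝ, 0 ≤ c ∧ x = c • toR w} ∈ F)
    (hsupp : ⋃₀ F = {x | ∃ c : ℝ, 0 ≤ c ∧ ∃ y ∈ P, x = c • y})
    (k : ℕ) (u : Fin k → (Fin 4 → ℤ))
    (hindep : LinearIndependent ℝ (fun i => toR (u i)))
    (hubd : ∀ i, toR (u i) ∈ frontier P)
    (hσ : {x | ∃ a : Fin k → ℝ, (∀ i, 0 ≤ a i) ∧ x = ∑ i, a i • toR (u i)} ∈ F)
    (hbp1 : ¬ ∃ m ∈ M, ∀ i, (∑ l, (m l : ℝ) * (u i l : ℝ)) = -1)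
    (hbp2 : ∀ j : Fin k, ∃ m ∈ M, ∀ i, i ≠ j → (∑ l, (m l : ℝ) * (u i l : ℝ)) = -1) :
    k = 3 := by
  classical
  have hPM' : P = {x | ∀ m ∈ M, (-1 : ℝ) ≤ dotZ m x} := hPM
  have hPcomp : IsCompact P := by
    rw [hPV]
    exact (V.finite_toSet.image toR).isCompact_convexHull ℝ
  have hPmem : ∀ i, toR (u i) ∈ P := fun i => (P_isClosed hPM').frontier_subset (hubd i)
  have hk4 : k ≤ 4 := by
    have h1 := hindep.fintype_card_le_finrank
    simpa using h1
  interval_cases k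
  · -- k = 0
    exfalso
    refine no_recession hPM' hPcomp (x := fun _ => 1) (by
      intro h; exact one_ne_zero (congrFun h 0)) ?_
    intro m hm
    exact absurd ⟨m, hm, fun i => i.elim0⟩ hbp1
  · -- k = 1
    exfalso
    obtain ⟨hxP, m, hm, ht⟩ := frontier_tight hPM' (hubd 0)
    exact hbp1 ⟨m, hm, fun i => by rw [Subsingleton.elim i 0]; exact ht⟩
  · -- k = 2
    exfalso
    set w : Fin 4 → ℤ := u 0 + u 1 with hw
    have hwR : toR w = toR (u 0) + toR (u 1) := by
      funext l
      simp only [toR, hw, Pi.add_apply, Int.cast_add]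
    have hAle : ∀ m ∈ M, ∀ i : Fin 2, (-1 : ℤ) ≤ ∑ l, m l * u i l := by
      intro m hm i
      have h1 : (-1 : ℝ) ≤ dotZ m (toR (u i)) := by
        have := (hPM' ▸ hPmem i) m hm
        exact this
      rw [dotZ_toR] at h1
      exact_mod_cast h1
    have hAne : ∀ m ∈ M, ¬((∑ l, m l * u 0 l) = -1 ∧ (∑ l, m l * u 1 l) = -1) := by
      rintro m hm ⟨h1, h2⟩
      refine hbp1 ⟨m, hm, fun i => ?_⟩
      show dotZ m (toR (u i)) = -1
      rw [dotZ_toR]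
      fin_cases i
      · exact_mod_cast h1
      · exact_mod_cast h2
    have hdotw : ∀ m : Fin 4 → ℤ, dotZ m (toR w)
        = ((∑ l, m l * u 0 l : ℤ) : ℝ) + ((∑ l, m l * u 1 l : ℤ) : ℝ) := by
      intro m
      rw [hwR, dotZ_add, dotZ_toR, dotZ_toR]
    have hwP : toR w ∈ P := by
      rw [hPM']
      intro m hm
      rw [hdotw m]
      have h0' := hAle m hm 0
      have h1' := hAle m hm 1
      have h2' := hAne m hm
      have : (-1 : ℤ) ≤ (∑ l, m l * u 0 l) + (∑ l, m l * u 1 l) := by omega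
      exact_mod_cast this
    have hw0 : toR w ≠ 0 := by
      intro h
      have hsum : ∑ i : Fin 2, (fun _ : Fin 2 => (1 : ℝ)) i • toR (u i) = 0 := by
        rw [Fin.sum_univ_two]
        simp only [one_smul]
        rw [← hwR, h]
      have := Fintype.linearIndependent_iff.1 hindep _ hsum 0
      norm_num at this
    by_cases hneg : ∃ m ∈ M, dotZ m (toR w) < 0
    · obtain ⟨m, hm, hlt⟩ := hneg
      have htight : dotZ m (toR w) = -1 := by
        rw [hdotw m] at hlt ⊢
        have h0' := hAle m hm 0
        have h1' := hAle m hm 1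
        have h2' := hAne m hm
        have hlt' : (∑ l, m l * u 0 l) + (∑ l, m l * u 1 l) < 0 := by exact_mod_cast hlt
        have : (∑ l, m l * u 0 l) + (∑ l, m l * u 1 l) = -1 := by omega
        exact_mod_cast this
      have hfr : toR w ∈ frontier P := tight_mem_frontier hPM' hwP hm htight
      have hR := hfine w hfr
      have hu0σ : toR (u 0) ∈
          {x | ∃ a : Fin 2 → ℝ, (∀ i, 0 ≤ a i) ∧ x = ∑ i, a i • toR (u i)} := by
        refine ⟨![1, 0], fun i => by fin_cases i <;> norm_num, ?_⟩
        rw [Fin.sum_univ_two]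
        simp
      have hne2 : {x | ∃ a : Fin 2 → ℝ, (∀ i, 0 ≤ a i) ∧ x = ∑ i, a i • toR (u i)}
          ≠ {x | ∃ c : ℝ, 0 ≤ c ∧ x = c • toR w} := by
        intro hEq
        rw [hEq] at hu0σ
        obtain ⟨c, hc, hc2⟩ := hu0σ
        have hc2' : toR (u 0) = c • toR (u 0) + c • toR (u 1) := by
          rw [hwR, smul_add] at hc2
          exact hc2
        have hsum : ∑ i : Fin 2, (![1 - c, -c] : Fin 2 → ℝ) i • toR (u i) = 0 := by
          rw [Fin.sum_univ_two]
          show (1 - c) • toR (u 0) + (-c) • toR (u 1) = 0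
          calc (1 - c) • toR (u 0) + (-c) • toR (u 1)
              = toR (u 0) - (c • toR (u 0) + c • toR (u 1)) := by
                rw [sub_smul, one_smul, neg_smul]; abel
            _ = 0 := by rw [← hc2']; simp
        have h1' := Fintype.linearIndependent_iff.1 hindep _ hsum 1
        have h0' := Fintype.linearIndependent_iff.1 hindep _ hsum 0
        simp only [Matrix.cons_val_one, Matrix.head_cons, Matrix.cons_val_zero, neg_eq_zero] at h1' h0'
        rw [h1'] at h0'
        norm_num at h0'
      have h1 : toR w ∈ intrinsicInterior ℝ
          {x | ∃ a : Fin 2 → ℝ, (∀ i, 0 ≤ a i) ∧ x = ∑ i, a i • toR (u i)} := by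
        have hmem := mem_intrinsicInterior_cone (v := fun i => toR (u i)) hindep
          (b := fun _ => (1 : ℝ)) (fun _ => one_pos)
        have hpt : ∑ i : Fin 2, (fun _ : Fin 2 => (1 : ℝ)) i • toR (u i) = toR w := by
          rw [Fin.sum_univ_two]
          simp only [one_smul]
          rw [← hwR]
        rwa [hpt] at hmem
      have hReq : {x : Fin 4 → ℝ | ∃ c : ℝ, 0 ≤ c ∧ x = c • toR w}
          = {x | ∃ a : Fin 1 → ℝ, (∀ i, 0 ≤ a i) ∧ x = ∑ i, a i • (fun _ : Fin 1 => toR w) i} := by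
        ext x
        constructor
        · rintro ⟨c, hc, rfl⟩
          exact ⟨fun _ => c, fun _ => hc, by simp⟩
        · rintro ⟨a, ha, rfl⟩
          exact ⟨a 0, ha 0, by simp⟩
      have h2 : toR w ∈ intrinsicInterior ℝ {x : Fin 4 → ℝ | ∃ c : ℝ, 0 ≤ c ∧ x = c • toR w} := by
        rw [hReq]
        have hind1 : LinearIndependent ℝ (fun _ : Fin 1 => toR w) :=
          linearIndependent_unique_iff.2 hw0
        have hmem := mem_intrinsicInterior_cone hind1 (b := fun _ => (1 : ℝ)) (fun _ => one_pos)
        have hpt : ∑ i : Fin 1, (fun _ : Fin 1 => (1 : ℝ)) i • (fun _ : Fin 1 => toR w) i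
            = toR w := by simp
        rwa [hpt] at hmem
      exact Set.eq_empty_iff_forall_notMem.1
        (hfan _ hσ _ hR hne2) (toR w) ⟨h1, h2⟩
    · push_neg at hneg
      exact no_recession hPM' hPcomp hw0 hneg
  · rfl
  · -- k = 4
    exfalso
    have hcard : Fintype.card (Fin 4) = Module.finrank ℝ (Fin 4 → ℝ) := by simp
    set B := basisOfLinearIndependentOfCardEqFinrank hindep hcard with hBdef
    have hB : ⇑B = fun i => toR (u i) := coe_basisOfLinearIndependentOfCardEqFinrank _ _
    set r := B.equivFun with hrdef
    have hsymm : ∀ a : Fin 4 → ℝ, r.symm a = ∑ i, a i • toR (u i) := by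
      intro a
      rw [hrdef, Module.Basis.equivFun_symm_apply]
      exact Finset.sum_congr rfl fun i _ => by rw [hB]
    have hrsum : ∀ a : Fin 4 → ℝ, r (∑ i, a i • toR (u i)) = a := by
      intro a
      rw [← hsymm]
      exact r.apply_symm_apply a
    have hxsum : ∀ x : Fin 4 → ℝ, x = ∑ i, r x i • toR (u i) := by
      intro x
      rw [← hsymm]
      exact (r.symm_apply_apply x).symm
    have hrcont : ∀ i, Continuous fun x => r x i := by
      intro i
      have h1 : Continuous r := LinearMap.continuous_of_finiteDimensional
        (r : (Fin 4 → ℝ) →ₗ[ℝ] (Fin 4 → ℝ))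
      exact (continuous_apply i).comp h1
    set σS := {x : Fin 4 → ℝ | ∃ a : Fin 4 → ℝ, (∀ i, 0 ≤ a i) ∧ x = ∑ i, a i • toR (u i)}
      with hσS
    have hσmem : ∀ x : Fin 4 → ℝ, x ∈ σS ↔ ∀ i, 0 ≤ r x i := by
      intro x
      constructor
      · rintro ⟨a, ha, rfl⟩
        rw [hrsum]
        exact ha
      · intro h
        exact ⟨r x, h, hxsum x⟩
    have hσclosed : IsClosed σS := by
      have h1 : σS = ⋂ i, {x | 0 ≤ r x i} := by
        ext x
        rw [Set.mem_iInter.symm.symm]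
        simp only [Set.mem_iInter, Set.mem_setOf_eq]
        exact hσmem x
      rw [h1]
      exact isClosed_iInter fun i => isClosed_le continuous_const (hrcont i)
    have hσconv : Convex ℝ σS := by
      intro x hx y hy a b ha hb hab
      rw [hσmem] at hx hy ⊢
      intro i
      have h1 : r (a • x + b • y) = a • r x + b • r y := by
        simp [map_add, map_smul]
      rw [h1]
      simp only [Pi.add_apply, Pi.smul_apply, smul_eq_mul]
      exact add_nonneg (mul_nonneg ha (hx i)) (mul_nonneg hb (hy i))
    have hPconv : Convex ℝ P := by
      rw [hPV]
      exact convex_convexHull ℝ _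
    set Q := σS ∩ P with hQ
    have hQcomp : IsCompact Q := hPcomp.inter_left hσclosed
    have hQconv : Convex ℝ Q := hσconv.inter hPconv
    have hKM := closure_convexHull_extremePoints hQcomp hQconv
    choose mj hmjM hmj using hbp2
    have hmjdot : ∀ j i, i ≠ j → dotZ (mj j) (toR (u i)) = -1 := fun j i hij => hmj j i hij
    have hdotsum : ∀ m : Fin 4 → ℤ, ∀ a : Fin 4 → ℝ,
        dotZ m (∑ i, a i • toR (u i)) = ∑ i, a i * dotZ m (toR (u i)) := by
      intro m a
      rw [dotZ_sum]
      exact Finset.sum_congr rfl fun i _ => dotZ_smul m (a i) _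
    have hdle : ∀ m ∈ M, ∀ i, (-1 : ℝ) ≤ dotZ m (toR (u i)) :=
      fun m hm i => (hPM' ▸ hPmem i) m hm
    have huσ : ∀ i, toR (u i) ∈ σS := by
      intro i
      refine ⟨fun j => if j = i then 1 else 0, fun j => by positivity, ?_⟩
      simp [ite_smul]
    by_cases hA : ∃ q ∈ Q.extremePoints ℝ, ∀ i, 0 < r q i
    · obtain ⟨q, hqext, hqpos⟩ := hA
      have hqQ : q ∈ Q := hqext.1
      have hqP : q ∈ P := hqQ.2
      have hUopen : IsOpen {z : Fin 4 → ℝ | ∀ i, 0 < r z i} := by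
        have h1 : {z : Fin 4 → ℝ | ∀ i, 0 < r z i} = ⋂ i, {z | 0 < r z i} := by
          ext z; simp
        rw [h1]
        exact isOpen_iInter_of_finite fun i => isOpen_lt continuous_const (hrcont i)
      have hqextP : q ∈ P.extremePoints ℝ := by
        refine mem_extremePoints.2 ⟨hqP, fun x hx y hy hseg => ?_⟩
        obtain ⟨a, b, ha, hb, hab, habq⟩ := hseg
        have hcx : ContinuousAt (fun t : ℝ => q + t • (x - q)) 0 := by fun_prop
        have hcy : ContinuousAt (fun t : ℝ => q + t • (y - q)) 0 := by fun_prop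
        have hevx : ∀ᶠ t : ℝ in nhds 0, q + t • (x - q) ∈ {z | ∀ i, 0 < r z i} := by
          refine hcx.eventually_mem (hUopen.mem_nhds ?_)
          simpa using hqpos
        have hevy : ∀ᶠ t : ℝ in nhds 0, q + t • (y - q) ∈ {z | ∀ i, 0 < r z i} := by
          refine hcy.eventually_mem (hUopen.mem_nhds ?_)
          simpa using hqpos
        obtain ⟨ε, hε, hball⟩ := Metric.eventually_nhds_iff.1 (hevx.and hevy)
        set t := min (ε / 2) (1 / 2) with htdef
        have ht0 : 0 < t := lt_min (by linarith) (by norm_num)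
        have ht1 : t ≤ 1 / 2 := min_le_right _ _
        have htd : dist t (0 : ℝ) < ε := by
          rw [Real.dist_eq, sub_zero, abs_of_pos ht0]
          calc t ≤ ε / 2 := min_le_left _ _
            _ < ε := by linarith
        obtain ⟨hx', hy'⟩ := hball htd
        have hx'P : q + t • (x - q) ∈ P := by
          have h1 : q + t • (x - q) = (1 - t) • q + t • x := by
            rw [sub_smul, one_smul, smul_sub]
            abel
          rw [h1]
          exact hPconv hqP hx (by linarith) ht0.le (by ring)
        have hy'P : q + t • (y - q) ∈ P := by
          have h1 : q + t • (y - q) = (1 - t) • q + t • y := by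
            rw [sub_smul, one_smul, smul_sub]
            abel
          rw [h1]
          exact hPconv hqP hy (by linarith) ht0.le (by ring)
        have hx'σ : q + t • (x - q) ∈ σS := (hσmem _).2 fun i => (hx' i).le
        have hy'σ : q + t • (y - q) ∈ σS := (hσmem _).2 fun i => (hy' i).le
        have hseg' : q ∈ openSegment ℝ (q + t • (x - q)) (q + t • (y - q)) := by
          refine ⟨a, b, ha, hb, hab, ?_⟩
          funext l
          have h1 : a * x l + b * y l = q l := by
            have := congrFun habq l
            simpa using this
          have h2 : a + b = 1 := hab
          simp only [Pi.add_apply, Pi.smul_apply, smul_eq_mul, Pi.sub_apply]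
          linear_combination t * h1 + (q l * (1 - t)) * h2
        obtain ⟨hxq, hyq⟩ := (mem_extremePoints.1 hqext).2 _ ⟨hx'σ, hx'P⟩ _ ⟨hy'σ, hy'P⟩ hseg'
        constructor
        · have h3 : t • (x - q) = 0 := by
            have := hxq
            rwa [add_eq_left] at this
          have h4 : x - q = 0 := by
            rcases smul_eq_zero.1 h3 with h | h
            · exact absurd h ht0.ne'
            · exact h
          exact sub_eq_zero.1 h4
        · have h3 : t • (y - q) = 0 := by
            have := hyq
            rwa [add_eq_left] at this
          have h4 : y - q = 0 := by
            rcases smul_eq_zero.1 h3 with h | h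
            · exact absurd h ht0.ne'
            · exact h
          exact sub_eq_zero.1 h4
      have hqV : q ∈ toR '' ↑V := by
        have h1 : q ∈ (convexHull ℝ (toR '' ↑V)).extremePoints ℝ := hPV ▸ hqextP
        exact extremePoints_convexHull_subset h1
      obtain ⟨wq, hwqV, hwq⟩ := hqV
      have hqni : q ∉ interior P := by
        intro hqi
        obtain ⟨ε, hε, hball⟩ := Metric.isOpen_iff.1 isOpen_interior q hqi
        set d : Fin 4 → ℝ := fun _ => ε / 2 with hd
        have hdn : ‖d‖ = ε / 2 := by
          rw [hd]
          rw [pi_norm_const]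
          rw [Real.norm_eq_abs, abs_of_pos (by linarith)]
        have hplus : q + d ∈ P := interior_subset (hball (by
          rw [Metric.mem_ball, dist_eq_norm, add_sub_cancel_left, hdn]; linarith))
        have hminus : q - d ∈ P := interior_subset (hball (by
          rw [Metric.mem_ball, dist_eq_norm, sub_sub_cancel_left, norm_neg, hdn]; linarith))
        have hseg : q ∈ openSegment ℝ (q - d) (q + d) := by
          refine ⟨1 / 2, 1 / 2, by norm_num, by norm_num, by norm_num, ?_⟩
          funext l
          simp only [Pi.add_apply, Pi.smul_apply, Pi.sub_apply, smul_eq_mul]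
          ring
        obtain ⟨h5, -⟩ := (mem_extremePoints.1 hqextP).2 _ hminus _ hplus hseg
        have h6 : d = 0 := by
          rwa [sub_eq_self] at h5
        have h7 : (ε / 2 : ℝ) = 0 := congrFun h6 0
        linarith
      have hqfr : q ∈ frontier P := ⟨subset_closure hqP, hqni⟩
      have hRq := hfine wq (hwq ▸ hqfr)
      have hq0 : q ≠ 0 := fun h => hqni (h ▸ h0)
      have hneq : σS ≠ {x | ∃ c : ℝ, 0 ≤ c ∧ x = c • toR wq} := by
        intro hEq
        obtain ⟨c0, hc0, hc0e⟩ := hEq ▸ huσ 0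
        obtain ⟨c1, hc1, hc1e⟩ := hEq ▸ huσ 1
        have hu0 : toR (u 0) ≠ (0 : Fin 4 → ℝ) := hindep.ne_zero 0
        have hc0ne : c0 ≠ 0 := by
          rintro rfl
          rw [zero_smul] at hc0e
          exact hu0 hc0e
        have hsum : ∑ i : Fin 4, (![c1, -c0, 0, 0] : Fin 4 → ℝ) i • toR (u i) = 0 := by
          rw [Fin.sum_univ_four]
          show c1 • toR (u 0) + (-c0) • toR (u 1) + (0 : ℝ) • toR (u 2)
            + (0 : ℝ) • toR (u 3) = 0
          rw [hc0e, hc1e, zero_smul, zero_smul, smul_smul, smul_smul]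
          rw [mul_comm]
          simp [neg_smul]
        have h7 := Fintype.linearIndependent_iff.1 hindep _ hsum 1
        simp only [Matrix.cons_val_one, Matrix.head_cons, Matrix.cons_val_zero, neg_eq_zero] at h7
        exact hc0ne h7
      have hdisj := hfan _ hσ _ hRq hneq
      have hIq1 : q ∈ intrinsicInterior ℝ σS := by
        have hmem := mem_intrinsicInterior_cone (v := fun i => toR (u i)) hindep
          (b := fun i => r q i) hqpos
        rwa [← hxsum q] at hmem
      have hIq2 : q ∈ intrinsicInterior ℝ {x | ∃ c : ℝ, 0 ≤ c ∧ x = c • toR wq} := by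
        have hReq : {x : Fin 4 → ℝ | ∃ c : ℝ, 0 ≤ c ∧ x = c • toR wq}
            = {x | ∃ a : Fin 1 → ℝ, (∀ i, 0 ≤ a i)
                ∧ x = ∑ i, a i • (fun _ : Fin 1 => toR wq) i} := by
          ext x
          constructor
          · rintro ⟨c, hc, rfl⟩
            exact ⟨fun _ => c, fun _ => hc, by simp⟩
          · rintro ⟨a, ha, rfl⟩
            exact ⟨a 0, ha 0, by simp⟩
        rw [hReq]
        have hwq0 : toR wq ≠ (0 : Fin 4 → ℝ) := by rw [hwq]; exact hq0
        have hind1 : LinearIndependent ℝ (fun _ : Fin 1 => toR wq) :=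
          linearIndependent_unique_iff.2 hwq0
        have hmem := mem_intrinsicInterior_cone hind1 (b := fun _ => (1 : ℝ)) (fun _ => one_pos)
        have hpt : ∑ i : Fin 1, (fun _ : Fin 1 => (1 : ℝ)) i • (fun _ : Fin 1 => toR wq) i
            = q := by simp [hwq]
        rwa [hpt] at hmem
      exact Set.eq_empty_iff_forall_notMem.1 hdisj q ⟨hIq1, hIq2⟩
    · push_neg at hA
      have hext : Q.extremePoints ℝ ⊆ {x : Fin 4 → ℝ | ∑ i, r x i ≤ 1} := by
        intro q hq
        have hqQ : q ∈ Q := hq.1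
        have hge : ∀ i, 0 ≤ r q i := (hσmem q).1 hqQ.1
        obtain ⟨j, hj⟩ := hA q hq
        have hj0 : r q j = 0 := le_antisymm hj (hge j)
        have h1 : dotZ (mj j) q = ∑ i, r q i * dotZ (mj j) (toR (u i)) := by
          conv_lhs => rw [hxsum q]
          exact hdotsum _ _
        have h2 : ∑ i, r q i * dotZ (mj j) (toR (u i)) = ∑ i, -(r q i) := by
          refine Finset.sum_congr rfl fun i _ => ?_
          by_cases hij : i = j
          · subst hij
            rw [hj0]
            ring
          · rw [hmjdot j i hij]
            ring
        have h3 : (-1 : ℝ) ≤ dotZ (mj j) q := (hPM' ▸ hqQ.2) _ (hmjM j)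
        rw [h1, h2] at h3
        simp only [Finset.sum_neg_distrib] at h3
        simp only [Set.mem_setOf_eq]
        linarith
      have hΔconv : Convex ℝ {x : Fin 4 → ℝ | ∑ i, r x i ≤ 1} := by
        intro x hx y hy a b ha hb hab
        simp only [Set.mem_setOf_eq] at hx hy ⊢
        have h1 : r (a • x + b • y) = a • r x + b • r y := by simp [map_add, map_smul]
        rw [h1]
        simp only [Pi.add_apply, Pi.smul_apply, smul_eq_mul]
        rw [Finset.sum_add_distrib, ← Finset.mul_sum, ← Finset.mul_sum]
        nlinarith
      have hΔclosed : IsClosed {x : Fin 4 → ℝ | ∑ i, r x i ≤ 1} :=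
        isClosed_le (continuous_finset_sum _ fun i _ => hrcont i) continuous_const
      have hQΔ : Q ⊆ {x : Fin 4 → ℝ | ∑ i, r x i ≤ 1} := by
        rw [← hKM]
        exact closure_minimal (convexHull_min hext hΔconv) hΔclosed
      set z := ∑ i, (4⁻¹ : ℝ) • toR (u i) with hz
      have hzdot : ∀ m ∈ M, (-1 : ℝ) < dotZ m z := by
        intro m hm
        rw [hz, hdotsum]
        have hne : ∃ i, dotZ m (toR (u i)) ≠ -1 := by
          by_contra hcon
          push_neg at hcon
          exact hbp1 ⟨m, hm, fun i => hcon i⟩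
        obtain ⟨i0, hi0⟩ := hne
        have hstrict : (-4 : ℝ) < ∑ i, dotZ m (toR (u i)) := by
          have h4 := Finset.sum_lt_sum (f := fun _ : Fin 4 => (-1 : ℝ))
            (g := fun i => dotZ m (toR (u i)))
            (fun i _ => hdle m hm i)
            ⟨i0, Finset.mem_univ _, lt_of_le_of_ne (hdle m hm i0) (Ne.symm hi0)⟩
          simpa using h4
        rw [← Finset.mul_sum]
        linarith
      have hev : ∀ᶠ t : ℝ in nhds (1 : ℝ),
          t • z ∈ {x : Fin 4 → ℝ | ∀ m ∈ M, (-1 : ℝ) < dotZ m x} := by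
        have hct : ContinuousAt (fun t : ℝ => t • z) 1 := by fun_prop
        refine hct.eventually_mem ((strict_isOpen M).mem_nhds ?_)
        simpa using hzdot
      obtain ⟨ε, hε, hball⟩ := Metric.eventually_nhds_iff.1 hev
      set t := 1 + ε / 2 with htdef
      have htmem := hball (show dist t (1 : ℝ) < ε by
        rw [Real.dist_eq, htdef, add_sub_cancel_left, abs_of_pos (by linarith)]
        linarith)
      have htP : t • z ∈ P := by
        rw [hPM']
        exact fun m hm => (htmem m hm).le
      have hteq : t • z = ∑ i, (t * 4⁻¹) • toR (u i) := by
        rw [hz, Finset.smul_sum]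
        exact Finset.sum_congr rfl fun i _ => by rw [smul_smul]
      have htσ : t • z ∈ σS := ⟨fun _ => t * 4⁻¹, fun i => by positivity, hteq⟩
      have hfinal := hQΔ ⟨htσ, htP⟩
      have hrz : r (t • z) = fun _ : Fin 4 => t * 4⁻¹ := by
        rw [hteq]
        exact hrsum _
      rw [Set.mem_setOf_eq, hrz] at hfinal
      simp only [Finset.sum_const, Finset.card_univ, Fintype.card_fin, nsmul_eq_mul] at hfinal
      have hεpos : (0:ℝ) < ε := hε
      nlinarith
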